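/- Let n ≥ 1. Let A ∈ Matrix (Fin n) (Fin n) ℂ be skew-Hermitian (Aᴴ = −A) with n distinct eigenvalues, and let B be skew-Hermitian with A·B = B·A. Let φ be an ℝ-linear map from the real vector space of skew-Hermitian n×n matrices to itself satisfying φ(X)·A − A·φ(X) = X·B − B·X for every skew-Hermitian X. Let X₀ be skew-Hermitian with X₀·A = A·X₀. Then X₀ is an equilibrium of the Mishchenko–Fomenko equation Ẋ = [X, φ(X)] (i.e. [X₀, φ(X₀)] = 0) and is Lyapunov stable: for every ε > 0 there exists δ > 0 such that every differentiable curve X : I → Matrix (Fin n) (Fin n) ℂ with skew-Hermitian values, defined on an interval I containing 0, satisfying X'(t) = X(t)·φ(X(t)) − φ(X(t))·X(t) for all t ∈ I and ‖X(0) − X₀‖ < δ, satisfies ‖X(t) − X₀‖ < ε for all t ∈ I with t ≥ 0. -/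

import Mathlib

open Matrix

attribute [local instance] Matrix.normedAddCommGroup Matrix.normedSpace

section Helpers

open Polynomial

/-- Characteristic polynomial is invariant under conjugation by an invertible matrix. -/
lemma my_charpoly_conj {n : ℕ} (U V M : Matrix (Fin n) (Fin n) ℂ)
    (hUV : U * V = 1) : (U * M * V).charpoly = M.charpoly := by
  set f : Matrix (Fin n) (Fin n) ℂ →+* Matrix (Fin n) (Fin n) ℂ[X] :=
    (C : ℂ →+* ℂ[X]).mapMatrix with hf
  have hscal : ∀ N : Matrix (Fin n) (Fin n) ℂ[X],
      Matrix.scalar (Fin n) (X : ℂ[X]) * N = N * Matrix.scalar (Fin n) (X : ℂ[X]) := by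
    intro N
    ext i j
    simp [Matrix.scalar, Matrix.mul_apply, Matrix.diagonal, Finset.sum_ite_eq,
      Finset.sum_ite_eq', mul_comm]
  have hfmul : ∀ P Q : Matrix (Fin n) (Fin n) ℂ, f (P * Q) = f P * f Q := fun P Q =>
    _root_.map_mul f P Q
  have hUV' : f U * f V = 1 := by rw [← hfmul, hUV, _root_.map_one]
  have key : charmatrix (U * M * V) = f U * charmatrix M * f V := by
    unfold charmatrix
    rw [mul_sub, sub_mul]
    congr 1
    · rw [← hscal (f U), mul_assoc, hUV', mul_one]
    · rw [hfmul, hfmul]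
  have hdet : (f U).det * (f V).det = 1 := by
    rw [← Matrix.det_mul, hUV', Matrix.det_one]
  rw [Matrix.charpoly, key, Matrix.det_mul, Matrix.det_mul, Matrix.charpoly]
  calc (f U).det * (charmatrix M).det * (f V).det
      = (charmatrix M).det * ((f U).det * (f V).det) := by ring
    _ = (charmatrix M).det := by rw [hdet, mul_one]

lemma my_charpoly_diagonal {n : ℕ} (d : Fin n → ℂ) :
    (Matrix.diagonal d).charpoly = ∏ i : Fin n, (X - C (d i)) := by
  have hbt : (Matrix.diagonal d).BlockTriangular id := by
    intro i j hij
    exact Matrix.diagonal_apply_ne d (fun h : i = j => absurd (congrArg id h) (ne_of_gt hij))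
  rw [Matrix.charpoly_of_upperTriangular _ hbt]
  simp

lemma my_offdiag {n : ℕ} {d : Fin n → ℂ} (hd : Function.Injective d)
    {M : Matrix (Fin n) (Fin n) ℂ} (h : M * Matrix.diagonal d = Matrix.diagonal d * M)
    {i j : Fin n} (hij : i ≠ j) : M i j = 0 := by
  have h1 : M i j * d j = d i * M i j := by
    have := congrFun (congrFun h i) j
    rwa [Matrix.mul_diagonal, Matrix.diagonal_mul] at this
  have h2 : M i j * (d j - d i) = 0 := by linear_combination h1
  rcases mul_eq_zero.mp h2 with h3 | h3
  · exact h3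
  · exact absurd (hd (sub_eq_zero.mp h3)) (Ne.symm hij)

lemma my_eq_diagonal {n : ℕ} {M : Matrix (Fin n) (Fin n) ℂ}
    (h : ∀ i j, i ≠ j → M i j = 0) : M = Matrix.diagonal (fun i => M i i) := by
  ext i j
  by_cases hij : i = j
  · subst hij; simp
  · rw [Matrix.diagonal_apply_ne _ hij]; exact h i j hij

/-- The key trace identity. -/
lemma my_trace_key {n : ℕ} (d b x : Fin n → ℂ) (hd : Function.Injective d)
    (W C : Matrix (Fin n) (Fin n) ℂ)
    (hrel : ∀ i j, C i j * (d j - d i) = W i j * (b j - b i)) :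
    Matrix.trace ((W * C - C * W) * Matrix.diagonal x) = 0 := by
  have hsym : ∀ i j, W i j * C j i = W j i * C i j := by
    intro i j
    by_cases hij : i = j
    · subst hij; ring
    · have hne : d i - d j ≠ 0 := fun h => hij (hd (sub_eq_zero.mp h))
      apply mul_left_cancel₀ hne
      have e1 := hrel j i
      have e2 := hrel i j
      calc (d i - d j) * (W i j * C j i) = W i j * (C j i * (d i - d j)) := by ring
        _ = W i j * (W j i * (b i - b j)) := by rw [e1]
        _ = W j i * (-(W i j * (b j - b i))) := by ring
        _ = W j i * (-(C i j * (d j - d i))) := by rw [e2]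
        _ = (d i - d j) * (W j i * C i j) := by ring
  have hexp : Matrix.trace ((W * C - C * W) * Matrix.diagonal x)
      = ∑ i : Fin n, ∑ j : Fin n, W i j * C j i * (x i - x j) := by
    have hdiag : ∀ i, ((W * C - C * W) * Matrix.diagonal x).diag i
        = (∑ j, W i j * C j i - ∑ j, C i j * W j i) * x i := by
      intro i
      have : ((W * C - C * W) * Matrix.diagonal x).diag i = (W * C - C * W) i i * x i := by
        simp only [Matrix.diag]
        rw [Matrix.mul_diagonal]
      rw [this]
      simp [Matrix.sub_apply, Matrix.mul_apply]
    rw [Matrix.trace, Finset.sum_congr rfl (fun i _ => hdiag i)]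
    have swap : ∑ i : Fin n, ∑ j : Fin n, C i j * W j i * x i
        = ∑ i : Fin n, ∑ j : Fin n, W i j * C j i * x j := by
      rw [Finset.sum_comm]
      exact Finset.sum_congr rfl fun i _ => Finset.sum_congr rfl fun j _ => by ring
    calc ∑ i : Fin n, (∑ j, W i j * C j i - ∑ j, C i j * W j i) * x i
        = ∑ i : Fin n, (∑ j : Fin n, W i j * C j i * x i - ∑ j : Fin n, C i j * W j i * x i) := by
          exact Finset.sum_congr rfl fun i _ => by
            rw [sub_mul, Finset.sum_mul, Finset.sum_mul]
      _ = ∑ i : Fin n, ∑ j : Fin n, W i j * C j i * x i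
          - ∑ i : Fin n, ∑ j : Fin n, C i j * W j i * x i := by
          rw [Finset.sum_sub_distrib]
      _ = ∑ i : Fin n, ∑ j : Fin n, W i j * C j i * x i
          - ∑ i : Fin n, ∑ j : Fin n, W i j * C j i * x j := by rw [swap]
      _ = ∑ i : Fin n, ∑ j : Fin n, W i j * C j i * (x i - x j) := by
          rw [← Finset.sum_sub_distrib]
          exact Finset.sum_congr rfl fun i _ => by
            rw [← Finset.sum_sub_distrib]
            exact Finset.sum_congr rfl fun j _ => by ring
  rw [hexp]
  set S := ∑ i : Fin n, ∑ j : Fin n, W i j * C j i * (x i - x j) with hS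
  have hneg : S = -S := by
    rw [hS]
    nth_rewrite 1 [Finset.sum_comm]
    rw [← Finset.sum_neg_distrib]
    exact Finset.sum_congr rfl fun i _ => by
      rw [← Finset.sum_neg_distrib]
      exact Finset.sum_congr rfl fun j _ => by
        have := hsym i j
        linear_combination (x i - x j) * this
  have : S + S = 0 := by linear_combination hneg
  exact add_self_eq_zero.mp this

/-- The entry map as a continuous `ℝ`-linear map. -/
noncomputable def entryCLM {n : ℕ} (i j : Fin n) :
    Matrix (Fin n) (Fin n) ℂ →L[ℝ] ℂ :=
  LinearMap.mkContinuous
    ((Matrix.entryLinearMap ℂ ℂ i j).restrictScalars ℝ) 1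
    (fun M => by
      simpa using (Matrix.norm_entry_le_entrywise_sup_norm M (i := i) (j := j)))

@[simp] lemma entryCLM_apply {n : ℕ} (i j : Fin n) (M : Matrix (Fin n) (Fin n) ℂ) :
    entryCLM i j M = M i j := rfl

lemma trace_eq_sum_prod {n : ℕ} (M N : Matrix (Fin n) (Fin n) ℂ) :
    Matrix.trace (M * N) = ∑ p : Fin n × Fin n, M p.1 p.2 * N p.2 p.1 := by
  rw [Matrix.trace]
  simp only [Matrix.diag, Matrix.mul_apply]
  rw [Fintype.sum_prod_type]

end Helpers

/-- An equilibrium `X₀ ∈ 𝔠(A)` of the Mishchenko–Fomenko top on `𝔲(n)`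
(defined by a sectional operator `φ` with `⁅φ(X), A⁆ = ⁅X, B⁆`, where `A` is
skew-Hermitian with simple spectrum and `B` is skew-Hermitian commuting with `A`)
is Lyapunov stable. -/
theorem statement8 (n : ℕ) (hn : 1 ≤ n)
    (A B : Matrix (Fin n) (Fin n) ℂ)
    (hA : Aᴴ = -A) (hB : Bᴴ = -B) (hAB : A * B = B * A)
    (hsimple : ∃ μs : Fin n → ℂ, Function.Injective μs ∧
      A.charpoly = ∏ i : Fin n, (Polynomial.X - Polynomial.C (μs i)))
    (φ : Matrix (Fin n) (Fin n) ℂ → Matrix (Fin n) (Fin n) ℂ)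
    (hφadd : ∀ X Y : Matrix (Fin n) (Fin n) ℂ,
      Xᴴ = -X → Yᴴ = -Y → φ (X + Y) = φ X + φ Y)
    (hφsmul : ∀ (r : ℝ) (X : Matrix (Fin n) (Fin n) ℂ), Xᴴ = -X → φ (r • X) = r • φ X)
    (hφrange : ∀ X : Matrix (Fin n) (Fin n) ℂ, Xᴴ = -X → (φ X)ᴴ = -φ X)
    (hφsec : ∀ X : Matrix (Fin n) (Fin n) ℂ, Xᴴ = -X →
      φ X * A - A * φ X = X * B - B * X)
    (X₀ : Matrix (Fin n) (Fin n) ℂ) (hX₀ : X₀ᴴ = -X₀) (hX₀A : X₀ * A = A * X₀) :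
    X₀ * φ X₀ - φ X₀ * X₀ = 0 ∧
      ∀ ε > (0 : ℝ), ∃ δ > (0 : ℝ),
        ∀ (I : Set ℝ) (X : ℝ → Matrix (Fin n) (Fin n) ℂ),
          I.OrdConnected → (0 : ℝ) ∈ I →
          (∀ t ∈ I, (X t)ᴴ = -(X t)) →
          (∀ t ∈ I, HasDerivWithinAt X (X t * φ (X t) - φ (X t) * X t) I t) →
          ‖X 0 - X₀‖ < δ →
          ∀ t ∈ I, 0 ≤ t → ‖X t - X₀‖ < ε := by
  classical
  -- Diagonalize A
  have hH : (Complex.I • A).IsHermitian := by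
    unfold Matrix.IsHermitian
    rw [Matrix.conjTranspose_smul, hA]
    simp [Complex.conj_I]
  set U : Matrix (Fin n) (Fin n) ℂ := (hH.eigenvectorUnitary : Matrix (Fin n) (Fin n) ℂ) with hU
  have hU1 : star U * U = 1 := Unitary.coe_star_mul_self hH.eigenvectorUnitary
  have hU2 : U * star U = 1 := Unitary.coe_mul_star_self hH.eigenvectorUnitary
  set d : Fin n → ℂ := fun i => (-Complex.I) * (hH.eigenvalues i : ℂ) with hdd
  have hAd : A = U * Matrix.diagonal d * star U := by
    have h1 := hH.spectral_theorem
    have h2 : A = (-Complex.I) • (Complex.I • A) := by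
      rw [smul_smul]
      simp [Complex.I_mul_I]
    rw [h2, h1]
    rw [Unitary.conjStarAlgAut_apply]
    rw [← hU]
    rw [show -Complex.I • (U * Matrix.diagonal (RCLike.ofReal ∘ hH.eigenvalues) * star U)
      = U * (-Complex.I • Matrix.diagonal (RCLike.ofReal ∘ hH.eigenvalues)) * star U by
        rw [Matrix.mul_smul, Matrix.smul_mul]]
    congr 1
    congr 1
    rw [← Matrix.diagonal_smul]
    ext i j
    by_cases hij : i = j
    · subst hij
      simp [hdd]
    · rw [Matrix.diagonal_apply_ne _ hij, Matrix.diagonal_apply_ne _ hij]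
  -- injectivity of d
  obtain ⟨μs, hμinj, hchar⟩ := hsimple
  have hchard : A.charpoly = (Matrix.diagonal d).charpoly := by
    rw [hAd]
    exact my_charpoly_conj U (star U) (Matrix.diagonal d) hU2
  have hprodeq : ∏ i : Fin n, (Polynomial.X - Polynomial.C (μs i))
      = ∏ i : Fin n, (Polynomial.X - Polynomial.C (d i)) := by
    rw [← hchar, hchard, my_charpoly_diagonal]
  have hmults : Finset.univ.val.map μs = Finset.univ.val.map d := by
    have h1 : (Multiset.map (fun a => Polynomial.X - Polynomial.C a)
          (Finset.univ.val.map μs)).prod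
        = (Multiset.map (fun a => Polynomial.X - Polynomial.C a)
          (Finset.univ.val.map d)).prod := by
      rw [Multiset.map_map, Multiset.map_map]
      exact hprodeq
    have := congrArg Polynomial.roots h1
    rwa [Polynomial.roots_multiset_prod_X_sub_C, Polynomial.roots_multiset_prod_X_sub_C] at this
  have hd : Function.Injective d := by
    intro i j hij
    have hnodup : (Finset.univ.val.map d).Nodup := by
      rw [← hmults]
      exact Finset.univ.nodup.map hμinj
    exact Multiset.inj_on_of_nodup_map hnodup i (Finset.mem_univ i) j (Finset.mem_univ j) hij
  -- conjugation toolkit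
  have hconj : ∀ M N : Matrix (Fin n) (Fin n) ℂ,
      star U * (M * N) * U = (star U * M * U) * (star U * N * U) := by
    intro M N
    have h : U * (star U * (N * U)) = N * U := by rw [← mul_assoc, hU2, one_mul]
    simp only [mul_assoc, h]
  have hconjsub : ∀ M N : Matrix (Fin n) (Fin n) ℂ,
      star U * (M - N) * U = star U * M * U - star U * N * U := by
    intro M N
    rw [mul_sub, sub_mul]
  have hback : ∀ M : Matrix (Fin n) (Fin n) ℂ, U * (star U * M * U) * star U = M := by
    intro M
    calc U * (star U * M * U) * star U = (U * star U) * M * (U * star U) := by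
          simp only [mul_assoc]
      _ = M := by rw [hU2, one_mul, mul_one]
  have htrconj : ∀ M : Matrix (Fin n) (Fin n) ℂ,
      Matrix.trace (star U * M * U) = Matrix.trace M := by
    intro M
    rw [Matrix.trace_mul_comm, ← mul_assoc, hU2, one_mul]
  have hdiagA : star U * A * U = Matrix.diagonal d := by
    rw [hAd]
    calc star U * (U * Matrix.diagonal d * star U) * U
        = (star U * U) * Matrix.diagonal d * (star U * U) := by simp only [mul_assoc]
      _ = Matrix.diagonal d := by rw [hU1, one_mul, mul_one]
  have hdiagOf : ∀ M : Matrix (Fin n) (Fin n) ℂ, M * A = A * M →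
      star U * M * U = Matrix.diagonal (fun i => (star U * M * U) i i) := by
    intro M hM
    apply my_eq_diagonal
    intro i j hij
    refine my_offdiag hd ?_ hij
    rw [← hdiagA, ← hconj, ← hconj, hM]
  -- part 1 : equilibrium
  have hBd := hdiagOf B hAB.symm
  have hX₀d := hdiagOf X₀ hX₀A
  set b : Fin n → ℂ := fun i => (star U * B * U) i i with hb
  set x : Fin n → ℂ := fun i => (star U * X₀ * U) i i with hx
  have hX₀B : X₀ * B = B * X₀ := by
    have h1 : star U * (X₀ * B) * U = star U * (B * X₀) * U := by
      rw [hconj, hconj, hX₀d, hBd, Matrix.diagonal_mul_diagonal, Matrix.diagonal_mul_diagonal]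
      exact congrArg Matrix.diagonal (funext fun i => mul_comm _ _)
    calc X₀ * B = U * (star U * (X₀ * B) * U) * star U := (hback _).symm
      _ = U * (star U * (B * X₀) * U) * star U := by rw [h1]
      _ = B * X₀ := hback _
  have hsec₀ := hφsec X₀ hX₀
  have hφX₀A : φ X₀ * A = A * φ X₀ := by
    have : φ X₀ * A - A * φ X₀ = 0 := by rw [hsec₀, hX₀B, sub_self]
    linear_combination (norm := noncomm_ring) this
  have hφX₀d := hdiagOf (φ X₀) hφX₀A
  have heq1 : star U * (X₀ * φ X₀) * U = star U * (φ X₀ * X₀) * U := by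
    rw [hconj, hconj, hX₀d, hφX₀d, Matrix.diagonal_mul_diagonal, Matrix.diagonal_mul_diagonal]
    exact congrArg Matrix.diagonal (funext fun i => mul_comm _ _)
  have hpart1 : X₀ * φ X₀ - φ X₀ * X₀ = 0 := by
    have heq : X₀ * φ X₀ = φ X₀ * X₀ := by
      calc X₀ * φ X₀ = U * (star U * (X₀ * φ X₀) * U) * star U := (hback _).symm
        _ = U * (star U * (φ X₀ * X₀) * U) * star U := by rw [heq1]
        _ = φ X₀ * X₀ := hback _
    rw [heq, sub_self]
  refine ⟨hpart1, ?_⟩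
  -- key trace identity along the flow
  have keytr : ∀ W : Matrix (Fin n) (Fin n) ℂ, Wᴴ = -W →
      Matrix.trace ((W * φ W - φ W * W) * X₀) = 0 := by
    intro W hW
    set Cm := φ W with hCm
    set W' := star U * W * U with hW'
    set C' := star U * Cm * U with hC'
    have hsecW := hφsec W hW
    have hconjsec : C' * Matrix.diagonal d - Matrix.diagonal d * C'
        = W' * Matrix.diagonal b - Matrix.diagonal b * W' := by
      calc C' * Matrix.diagonal d - Matrix.diagonal d * C'
          = star U * (Cm * A) * U - star U * (A * Cm) * U := by
            rw [← hdiagA, ← hconj, ← hconj]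
        _ = star U * (Cm * A - A * Cm) * U := (hconjsub _ _).symm
        _ = star U * (W * B - B * W) * U := by rw [hsecW]
        _ = star U * (W * B) * U - star U * (B * W) * U := hconjsub _ _
        _ = W' * Matrix.diagonal b - Matrix.diagonal b * W' := by
            rw [hconj, hconj, ← hBd]
    have hrel : ∀ i j, C' i j * (d j - d i) = W' i j * (b j - b i) := by
      intro i j
      have := congrFun (congrFun hconjsec i) j
      rw [Matrix.sub_apply, Matrix.sub_apply, Matrix.mul_diagonal, Matrix.diagonal_mul,
        Matrix.mul_diagonal, Matrix.diagonal_mul] at this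
      linear_combination this
    have h0 := my_trace_key d b x hd W' C' hrel
    calc Matrix.trace ((W * Cm - Cm * W) * X₀)
        = Matrix.trace (star U * ((W * Cm - Cm * W) * X₀) * U) := (htrconj _).symm
      _ = Matrix.trace ((star U * (W * Cm - Cm * W) * U) * (star U * X₀ * U)) := by
          rw [hconj]
      _ = Matrix.trace ((W' * C' - C' * W') * Matrix.diagonal x) := by
          rw [hconjsub, hconj, hconj, ← hX₀d]
      _ = 0 := h0
  -- stability
  intro ε hε
  have hn' : (0 : ℝ) < n := by exact_mod_cast hn
  refine ⟨ε / n, by positivity, ?_⟩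
  intro I X hI h0I hskew hderiv hinit t htI ht0
  set g : ℝ → ℂ := fun s => ∑ p : Fin n × Fin n,
    (X s p.1 p.2 - X₀ p.1 p.2) * (X s p.2 p.1 - X₀ p.2 p.1) with hg
  -- g has zero derivative on I
  have hgderiv : ∀ s ∈ I, HasDerivWithinAt g 0 I s := by
    intro s hs
    set D := X s * φ (X s) - φ (X s) * X s with hD
    have hdX := hderiv s hs
    have hentry : ∀ i j : Fin n, HasDerivWithinAt (fun u => X u i j) (D i j) I s := by
      intro i j
      exact ((entryCLM i j).hasFDerivAt).comp_hasDerivWithinAt s hdX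
    have hsum : HasDerivWithinAt g
        (∑ p : Fin n × Fin n, (D p.1 p.2 * (X s p.2 p.1 - X₀ p.2 p.1)
          + (X s p.1 p.2 - X₀ p.1 p.2) * D p.2 p.1)) I s := by
      apply HasDerivWithinAt.fun_sum
      intro p _
      exact ((hentry p.1 p.2).sub_const _).mul ((hentry p.2 p.1).sub_const _)
    have hval : (∑ p : Fin n × Fin n, (D p.1 p.2 * (X s p.2 p.1 - X₀ p.2 p.1)
        + (X s p.1 p.2 - X₀ p.1 p.2) * D p.2 p.1))
        = Matrix.trace (D * (X s - X₀)) + Matrix.trace ((X s - X₀) * D) := by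
      rw [trace_eq_sum_prod, trace_eq_sum_prod, ← Finset.sum_add_distrib]
      rfl
    have htr0 : Matrix.trace (D * (X s - X₀)) + Matrix.trace ((X s - X₀) * D) = 0 := by
      have e1 : Matrix.trace ((X s - X₀) * D) = Matrix.trace (D * (X s - X₀)) :=
        Matrix.trace_mul_comm _ _
      have e2 : Matrix.trace (D * (X s - X₀))
          = Matrix.trace (D * X s) - Matrix.trace (D * X₀) := by
        rw [mul_sub, Matrix.trace_sub]
      have e3 : Matrix.trace (D * X s) = 0 := by
        rw [hD, sub_mul, Matrix.trace_sub]
        rw [mul_assoc, Matrix.trace_mul_comm (X s) (φ (X s) * X s)]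
        exact sub_self _
      have e4 : Matrix.trace (D * X₀) = 0 := keytr (X s) (hskew s hs)
      rw [e1, e2, e3, e4]
      ring
    rw [hval, htr0] at hsum
    exact hsum
  -- g is constant on I
  have hIconv : Convex ℝ I := convex_iff_ordConnected.mpr hI
  have hgconst : g t = g 0 := by
    have hb := hIconv.norm_image_sub_le_of_norm_hasDerivWithin_le
      (C := 0) (f' := fun _ => (0 : ℂ)) hgderiv (fun s _ => by simp) h0I htI
    have : ‖g t - g 0‖ ≤ 0 := by simpa using hb
    have := le_antisymm this (norm_nonneg _)
    rwa [norm_eq_zero, sub_eq_zero] at this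
  -- rewrite g via norms, using skew-Hermitianity
  have hgnorm : ∀ s ∈ I, g s
      = -((∑ p : Fin n × Fin n, Complex.normSq ((X s - X₀) p.1 p.2) : ℝ) : ℂ) := by
    intro s hs
    have hYs : (X s - X₀)ᴴ = -(X s - X₀) := by
      rw [Matrix.conjTranspose_sub, hskew s hs, hX₀]
      abel
    have hent : ∀ i j : Fin n, (X s - X₀) j i = -(starRingEnd ℂ) ((X s - X₀) i j) := by
      intro i j
      have h' := congrFun (congrFun hYs j) i
      rw [Matrix.conjTranspose_apply, Matrix.neg_apply] at h'
      rw [show ((starRingEnd ℂ) ((X s - X₀) i j) : ℂ) = star ((X s - X₀) i j) from rfl, h',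
        neg_neg]
    rw [hg]
    push_cast
    rw [← Finset.sum_neg_distrib]
    refine Finset.sum_congr rfl fun p _ => ?_
    have h1 : X s p.2 p.1 - X₀ p.2 p.1 = (X s - X₀) p.2 p.1 := rfl
    have h2 : X s p.1 p.2 - X₀ p.1 p.2 = (X s - X₀) p.1 p.2 := rfl
    rw [h1, h2, hent p.1 p.2]
    rw [show (X s - X₀) p.1 p.2 * -(starRingEnd ℂ) ((X s - X₀) p.1 p.2)
      = -((X s - X₀) p.1 p.2 * (starRingEnd ℂ) ((X s - X₀) p.1 p.2)) by ring]
    rw [Complex.mul_conj]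
  -- the sum of squares is conserved
  set h0v : ℝ := ∑ p : Fin n × Fin n, Complex.normSq ((X 0 - X₀) p.1 p.2) with hh0
  set htv : ℝ := ∑ p : Fin n × Fin n, Complex.normSq ((X t - X₀) p.1 p.2) with hht
  have hsums : htv = h0v := by
    have e1 := hgnorm t htI
    have e2 := hgnorm 0 h0I
    rw [hgconst, e2] at e1
    have := neg_injective e1
    exact_mod_cast this.symm
  have hh0nonneg : 0 ≤ h0v := Finset.sum_nonneg fun p _ => Complex.normSq_nonneg _
  -- bound h0v strictly
  have hbound : h0v < ε ^ 2 := by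
    have hentb : ∀ p : Fin n × Fin n, Complex.normSq ((X 0 - X₀) p.1 p.2) ≤ ‖X 0 - X₀‖ ^ 2 := by
      intro p
      rw [Complex.normSq_eq_norm_sq]
      have := Matrix.norm_entry_le_entrywise_sup_norm (X 0 - X₀) (i := p.1) (j := p.2)
      exact pow_le_pow_left₀ (norm_nonneg _) this 2
    have h1 : h0v ≤ (n : ℝ) ^ 2 * ‖X 0 - X₀‖ ^ 2 := by
      calc h0v ≤ ∑ _p : Fin n × Fin n, ‖X 0 - X₀‖ ^ 2 :=
            Finset.sum_le_sum fun p _ => hentb p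
        _ = (n : ℝ) ^ 2 * ‖X 0 - X₀‖ ^ 2 := by
            rw [Finset.sum_const, Finset.card_univ, Fintype.card_prod, Fintype.card_fin,
              nsmul_eq_mul]
            push_cast
            ring
    have h2 : (n : ℝ) ^ 2 * ‖X 0 - X₀‖ ^ 2 < (n : ℝ) ^ 2 * (ε / n) ^ 2 := by
      apply mul_lt_mul_of_pos_left _ (by positivity)
      exact pow_lt_pow_left₀ hinit (norm_nonneg _) (by norm_num)
    have h3 : (n : ℝ) ^ 2 * (ε / n) ^ 2 = ε ^ 2 := by
      field_simp
    linarith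
  -- conclude
  have hnormle : ‖X t - X₀‖ ≤ Real.sqrt htv := by
    rw [Matrix.norm_le_iff (Real.sqrt_nonneg _)]
    intro i j
    have hle : Complex.normSq ((X t - X₀) i j) ≤ htv := by
      rw [hht]
      exact Finset.single_le_sum (f := fun p : Fin n × Fin n =>
        Complex.normSq ((X t - X₀) p.1 p.2))
        (fun p _ => Complex.normSq_nonneg _) (Finset.mem_univ ((i, j) : Fin n × Fin n))
    have : ‖(X t - X₀) i j‖ = Real.sqrt (Complex.normSq ((X t - X₀) i j)) := by
      rw [Complex.norm_def]
    rw [this]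
    exact Real.sqrt_le_sqrt hle
  have hfinal : Real.sqrt htv < ε := by
    rw [hsums]
    calc Real.sqrt h0v < Real.sqrt (ε ^ 2) := by
          apply Real.sqrt_lt_sqrt hh0nonneg hbound
      _ = ε := by
          rw [Real.sqrt_sq hε.le]
  exact lt_of_le_of_lt hnormle hfinal
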